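/- Let X be a finite set with |X| = p^k for a prime p. Then the number of unordered factor k-tuples (θ₁, …, θ_k) on X where each θᵢ has exactly p blocks equals p^k! / (k! · (p!)^k). -/

import Mathlib

open Function
open scoped Classical
noncomputable section

namespace Stmt7Aux

variable {X : Type*} [Fintype X] {p k : ℕ}

def T (X : Type*) [Fintype X] (p k : ℕ) : Set (Finset (Setoid X)) :=
  {S | S.card = k ∧ (∀ θ ∈ S, θ.classes.ncard = p) ∧
    Function.Bijective (fun x : X => fun θ : S => Quotient.mk θ.1 x)}

def coordKer (e : X ≃ (Fin k → Fin p)) (i : Fin k) : Setoid X :=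
  Setoid.ker fun x => e x i

lemma surj_coord [NeZero p] (e : X ≃ (Fin k → Fin p)) (i : Fin k) :
    Surjective fun x => e x i := fun c =>
  ⟨e.symm fun _ => c, by simp⟩

lemma coordKer_injective (hp : 1 < p) (e : X ≃ (Fin k → Fin p)) :
    Injective (coordKer e) := by
  haveI : NeZero p := ⟨by omega⟩
  intro i j hij
  by_contra hne
  set v : Fin k → Fin p := fun _ => 0 with hv
  set w : Fin k → Fin p := Function.update v j 1 with hw
  have h1 : (coordKer e i).r (e.symm v) (e.symm w) := by
    show e (e.symm v) i = e (e.symm w) i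
    simp only [e.apply_symm_apply]
    rw [hw, Function.update_of_ne hne]
  rw [hij] at h1
  have h2 : e (e.symm v) j = e (e.symm w) j := h1
  simp only [e.apply_symm_apply, hw, hv, Function.update_self] at h2
  have := congrArg Fin.val h2
  simp [Fin.val_one', Nat.mod_eq_of_lt hp] at this

def Se (e : X ≃ (Fin k → Fin p)) : Finset (Setoid X) :=
  Finset.univ.image (coordKer e)

lemma card_quotient_coordKer [NeZero p] (e : X ≃ (Fin k → Fin p)) (i : Fin k) :
    Nat.card (Quotient (coordKer e i)) = p := by
  have := (Setoid.quotientKerEquivOfSurjective _ (surj_coord e i))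
  simpa [coordKer] using Nat.card_congr this

lemma Se_mem_T (hp : 1 < p) (e : X ≃ (Fin k → Fin p)) : Se e ∈ T X p k := by
  haveI : NeZero p := ⟨by omega⟩
  refine ⟨?_, ?_, ?_, ?_⟩
  · rw [Se, Finset.card_image_of_injective _ (coordKer_injective hp e)]
    simp
  · intro θ hθ
    simp only [Se, Finset.mem_image, Finset.mem_univ, true_and] at hθ
    obtain ⟨i, rfl⟩ := hθ
    have h := Nat.card_congr (Setoid.quotientEquivClasses (coordKer e i))
    rw [card_quotient_coordKer e i] at h
    rw [← Nat.card_coe_set_eq]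
    exact h.symm
  · -- injective
    intro x y hxy
    apply e.injective
    funext i
    have hi : coordKer e i ∈ Se e := by
      simp [Se]
    have := congrFun hxy ⟨coordKer e i, hi⟩
    exact Quotient.exact this
  · -- surjective
    intro a
    set f : Fin k → Fin p := fun i =>
      Quotient.liftOn (a ⟨coordKer e i, by simp [Se]⟩) (fun x => e x i)
        (fun x y h => h) with hf
    refine ⟨e.symm f, ?_⟩
    funext θ
    obtain ⟨θ, hθ⟩ := θ
    simp only [Se, Finset.mem_image, Finset.mem_univ, true_and] at hθ
    obtain ⟨i, rfl⟩ := hθ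
    obtain ⟨y, hy⟩ := Quotient.exists_rep (a ⟨coordKer e i, by simp [Se]⟩)
    show Quotient.mk (coordKer e i) (e.symm f) = _
    rw [← hy]
    apply Quotient.sound
    show e (e.symm f) i = e y i
    rw [e.apply_symm_apply]
    rw [hf]
    simp only [← hy, Quotient.liftOn_mk]
    rfl


def mkEquiv (S : Finset (Setoid X)) (hS : S ∈ T X p k) (σ : Fin k ≃ S)
    (q : ∀ θ : S, Quotient θ.1 ≃ Fin p) : X ≃ (Fin k → Fin p) :=
  Equiv.ofBijective (fun x i => q (σ i) (Quotient.mk (σ i).1 x)) (by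
    constructor
    · intro x y hxy
      apply hS.2.2.1
      funext θ
      have h1 := congrFun hxy (σ.symm θ)
      have h2 : Quotient.mk (σ (σ.symm θ)).1 x = Quotient.mk (σ (σ.symm θ)).1 y :=
        (q _).injective h1
      rw [Equiv.apply_symm_apply] at h2
      exact h2
    · intro f
      obtain ⟨x, hx⟩ := hS.2.2.2 (fun θ => (q θ).symm (f (σ.symm θ)))
      refine ⟨x, ?_⟩
      funext i
      have := congrFun hx (σ i)
      simp only at this
      show q (σ i) (Quotient.mk (σ i).1 x) = f i
      rw [this]
      simp)

lemma coordKer_mkEquiv (S : Finset (Setoid X)) (hS : S ∈ T X p k) (σ : Fin k ≃ S)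
    (q : ∀ θ : S, Quotient θ.1 ≃ Fin p) (i : Fin k) :
    coordKer (mkEquiv S hS σ q) i = (σ i).1 := by
  apply Setoid.ext
  intro a b
  show q (σ i) (Quotient.mk (σ i).1 a) = q (σ i) (Quotient.mk (σ i).1 b) ↔ _
  rw [(q (σ i)).injective.eq_iff]
  exact ⟨Quotient.exact, fun h => Quotient.sound h⟩

lemma Se_mkEquiv (S : Finset (Setoid X)) (hS : S ∈ T X p k) (σ : Fin k ≃ S)
    (q : ∀ θ : S, Quotient θ.1 ≃ Fin p) :
    Se (mkEquiv S hS σ q) = S := by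
  ext θ
  simp only [Se, Finset.mem_image, Finset.mem_univ, true_and]
  constructor
  · rintro ⟨i, rfl⟩
    rw [coordKer_mkEquiv]
    exact (σ i).2
  · intro hθ
    exact ⟨σ.symm ⟨θ, hθ⟩, by rw [coordKer_mkEquiv]; simp⟩

variable (p k) in
def Fiber (S : Finset (Setoid X)) (hS : S ∈ T X p k) : Type _ :=
  {e : X ≃ (Fin k → Fin p) // Se e = S}

lemma mkEquiv_bijective (hp : 1 < p) (S : Finset (Setoid X)) (hS : S ∈ T X p k) :
    Function.Bijective (fun z : (Fin k ≃ S) × (∀ θ : S, Quotient θ.1 ≃ Fin p) =>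
      (⟨mkEquiv S hS z.1 z.2, Se_mkEquiv S hS z.1 z.2⟩ : Fiber p k S hS)) := by
  haveI : NeZero p := ⟨by omega⟩
  constructor
  · rintro ⟨σ, q⟩ ⟨σ', q'⟩ h
    have h' : mkEquiv S hS σ q = mkEquiv S hS σ' q' := congrArg Subtype.val h
    have hσ : σ = σ' := by
      apply Equiv.ext
      intro i
      apply Subtype.ext
      rw [← coordKer_mkEquiv S hS σ q i, ← coordKer_mkEquiv S hS σ' q' i, h']
    subst hσ
    have hq : q = q' := by
      funext θ
      obtain ⟨i, rfl⟩ := σ.surjective θ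
      apply Equiv.ext
      intro a
      obtain ⟨x, rfl⟩ := Quotient.exists_rep a
      have := congrFun (congrFun (congrArg (fun (e : X ≃ (Fin k → Fin p)) x i => e x i) h') x) i
      exact this
    rw [hq]
  · rintro ⟨e, he⟩
    have hmem : ∀ i : Fin k, coordKer e i ∈ S := by
      intro i; rw [← he]; simp [Se]
    set σ : Fin k ≃ S := Equiv.ofBijective (fun i => ⟨coordKer e i, hmem i⟩)
      ((Fintype.bijective_iff_injective_and_card _).2
        ⟨fun i j hij => coordKer_injective hp e (congrArg Subtype.val hij),
         by simp [Fintype.card_coe, hS.1]⟩) with hσdef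
    have hσ : ∀ θ : S, coordKer e (σ.symm θ) = θ.1 := by
      intro θ
      have := σ.apply_symm_apply θ
      exact congrArg Subtype.val this
    set q : ∀ θ : S, Quotient θ.1 ≃ Fin p := fun θ =>
      Equiv.ofBijective (Quotient.lift (fun x => e x (σ.symm θ))
        (fun x y hxy => by
          have : (coordKer e (σ.symm θ)).r x y := (hσ θ) ▸ hxy
          exact this))
        (by
          constructor
          · intro a b hab
            obtain ⟨x, rfl⟩ := Quotient.exists_rep a
            obtain ⟨y, rfl⟩ := Quotient.exists_rep b
            change e x (σ.symm θ) = e y (σ.symm θ) at hab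
            exact Quotient.sound ((hσ θ) ▸ (hab : (coordKer e (σ.symm θ)).r x y))
          · intro c
            obtain ⟨x, hx⟩ := surj_coord e (σ.symm θ) c
            exact ⟨Quotient.mk _ x, hx⟩) with hqdef
    refine ⟨⟨σ, q⟩, ?_⟩
    apply Subtype.ext
    apply Equiv.ext
    intro x
    funext i
    show q (σ i) (Quotient.mk (σ i).1 x) = e x i
    rw [hqdef]
    simp only [Equiv.ofBijective_apply, Quotient.lift_mk]
    exact congrArg (e x) (Equiv.symm_apply_apply σ i)


lemma card_T (hp : 1 < p) (hX : Fintype.card X = p ^ k) :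
    Nat.card (T X p k) * (k.factorial * p.factorial ^ k) = (p ^ k).factorial := by
  haveI : NeZero p := ⟨by omega⟩
  haveI : Finite (Setoid X) := Finite.of_injective (fun s => s.r)
    (fun a b h => Setoid.ext fun x y => iff_of_eq (congrFun (congrFun h x) y))
  haveI : Fintype (Setoid X) := Fintype.ofFinite _
  let Φ : (X ≃ (Fin k → Fin p)) → T X p k := fun e => ⟨Se e, Se_mem_T hp e⟩
  let big : (X ≃ (Fin k → Fin p)) ≃
      Σ S : T X p k, (Fin k ≃ S.1) × (∀ θ : S.1, Quotient θ.1 ≃ Fin p) :=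
    (Equiv.sigmaFiberEquiv Φ).symm.trans
      (Equiv.sigmaCongrRight fun S =>
        ((Equiv.subtypeEquivRight fun e => by
            simp only [Φ, Subtype.ext_iff]).trans
          (Equiv.ofBijective _ (mkEquiv_bijective hp S.1 S.2)).symm))
  have h1 : Nat.card (X ≃ (Fin k → Fin p)) = (p ^ k).factorial := by
    have e0 : X ≃ (Fin k → Fin p) := Fintype.equivOfCardEq (by simp [hX])
    rw [Nat.card_eq_fintype_card, Fintype.card_equiv e0, hX]
  have h2 := Nat.card_congr big
  rw [h1] at h2
  haveI : Fintype (T X p k) := Fintype.ofFinite _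
  have h3 : ∀ S : T X p k,
      Nat.card ((Fin k ≃ S.1) × (∀ θ : S.1, Quotient θ.1 ≃ Fin p))
        = k.factorial * p.factorial ^ k := by
    rintro ⟨S, hS⟩
    rw [Nat.card_prod, Nat.card_pi]
    have hc1 : Nat.card (Fin k ≃ ↥S) = k.factorial := by
      have hcc : Fintype.card (Fin k) = Fintype.card ↥S := by
        simp [Fintype.card_coe, hS.1]
      rw [Nat.card_eq_fintype_card, Fintype.card_equiv (Fintype.equivOfCardEq hcc)]
      simp
    have hc2 : ∀ θ : ↥S, Nat.card (Quotient θ.1 ≃ Fin p) = p.factorial := by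
      intro θ
      have hq : Nat.card (Quotient θ.1) = p := by
        rw [Nat.card_congr (Setoid.quotientEquivClasses θ.1), Nat.card_coe_set_eq]
        exact hS.2.1 θ θ.2
      haveI : Fintype (Quotient θ.1) := Fintype.ofFinite _
      have hcc : Fintype.card (Quotient θ.1) = Fintype.card (Fin p) := by
        rw [← Nat.card_eq_fintype_card, hq]; simp
      rw [Nat.card_eq_fintype_card, Fintype.card_equiv (Fintype.equivOfCardEq hcc),
        ← Nat.card_eq_fintype_card, hq]
    rw [hc1]
    congr 1
    rw [Finset.prod_congr rfl (fun θ _ => hc2 θ), Finset.prod_const, Finset.card_univ,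
      Fintype.card_coe, hS.1]
  have h4 : Nat.card (Σ S : T X p k, (Fin k ≃ S.1) × (∀ θ : S.1, Quotient θ.1 ≃ Fin p))
      = Nat.card (T X p k) * (k.factorial * p.factorial ^ k) := by
    haveI : ∀ S : T X p k, Fintype ((Fin k ≃ S.1) × (∀ θ : S.1, Quotient θ.1 ≃ Fin p)) :=
      fun S => Fintype.ofFinite _
    calc Nat.card (Σ S : T X p k, (Fin k ≃ S.1) × (∀ θ : S.1, Quotient θ.1 ≃ Fin p))
        = ∑ S : T X p k,
            Fintype.card ((Fin k ≃ S.1) × (∀ θ : S.1, Quotient θ.1 ≃ Fin p)) := by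
          rw [Nat.card_eq_fintype_card, Fintype.card_sigma]
      _ = ∑ _S : T X p k, (k.factorial * p.factorial ^ k) :=
          Finset.sum_congr rfl fun S _ => by rw [← Nat.card_eq_fintype_card]; exact h3 S
      _ = Nat.card (T X p k) * (k.factorial * p.factorial ^ k) := by
          rw [Finset.sum_const, Finset.card_univ, smul_eq_mul, Nat.card_eq_fintype_card]
  rw [h4] at h2
  exact h2.symm

end Stmt7Aux

theorem stmt_7 {X : Type*} [Fintype X] (p k : ℕ) (hp : p.Prime)
    (hX : Fintype.card X = p ^ k) :
    {S : Finset (Setoid X) | S.card = k ∧ (∀ θ ∈ S, θ.classes.ncard = p) ∧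
        Function.Bijective (fun x : X => fun θ : S => Quotient.mk θ.1 x)}.ncard =
      (p ^ k).factorial / (k.factorial * p.factorial ^ k) := by
  have h := Stmt7Aux.card_T (X := X) (p := p) (k := k) hp.one_lt hX
  rw [← Nat.card_coe_set_eq]
  symm
  apply Nat.div_eq_of_eq_mul_left
  · exact Nat.mul_pos k.factorial_pos (pow_pos p.factorial_pos k)
  · exact h.symm
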